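/- Let X be a real normed space such that every continuous linear functional on every subspace of X admits a unique norm-preserving extension to X. Then X* is strictly convex. -/

import Mathlib

set_option maxHeartbeats 1000000
set_option synthInstance.maxHeartbeats 400000

/-- Taylor–Foguel theorem (converse direction): if every continuous linear functional
on every subspace of the real normed space `X` admits a unique norm-preserving
extension to `X`, then the dual of `X` is strictly convex. -/
theorem dual_strictly_convex_of_unique_hahn_banach
    {X : Type*} [NormedAddCommGroup X] [NormedSpace ℝ X]
    (hu : ∀ (Y : Subspace ℝ X) (g : Y →L[ℝ] ℝ),
      ∃! f : X →L[ℝ] ℝ, (∀ y : Y, f y = g y) ∧ ‖f‖ = ‖g‖) :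
    ∀ f g : X →L[ℝ] ℝ, ‖f‖ = 1 → ‖g‖ = 1 → ‖f + g‖ = 2 → f = g := by
  intro f g hf hg hfg
  by_contra hne
  have hne' : f - g ≠ 0 := sub_ne_zero.mpr hne
  obtain ⟨z0, hz0⟩ : ∃ z, (f - g) z ≠ 0 := by
    by_contra h
    push_neg at h
    exact hne' (ContinuousLinearMap.ext fun x => by simpa using h x)
  set z : X := ((f - g) z0)⁻¹ • z0 with hzdef
  have hz : (f - g) z = 1 := by
    have : (f - g) z = ((f - g) z0)⁻¹ * (f - g) z0 := by
      rw [hzdef, map_smul, smul_eq_mul]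
    rw [this, inv_mul_cancel₀ hz0]
  set Y : Subspace ℝ X := LinearMap.ker ((f - g : X →L[ℝ] ℝ) : X →ₗ[ℝ] ℝ) with hY
  set g0 : Y →L[ℝ] ℝ := f.comp Y.subtypeL with hg0
  have hfy : ∀ y : Y, f y = g0 y := fun y => rfl
  have hgy : ∀ y : Y, g y = g0 y := by
    intro y
    have h1 : (f - g) (y : X) = 0 := y.2
    rw [ContinuousLinearMap.sub_apply, sub_eq_zero] at h1
    exact h1.symm.trans (hfy y)
  -- ‖g0‖ ≤ 1
  have hle : ‖g0‖ ≤ 1 := by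
    apply ContinuousLinearMap.opNorm_le_bound _ zero_le_one
    intro y
    calc ‖g0 y‖ = ‖f (y : X)‖ := rfl
      _ ≤ ‖f‖ * ‖(y : X)‖ := f.le_opNorm _
      _ = 1 * ‖y‖ := by rw [hf]; rfl
  -- key estimate
  have key : ∀ ε : ℝ, 0 < ε → 1 ≤ ‖g0‖ + ε * (1 + |f z| + ‖g0‖ * ‖z‖) := by
    intro ε hε
    have hg0nn : 0 ≤ ‖g0‖ := g0.opNorm_nonneg
    have hCnn : 1 ≤ 1 + |f z| + ‖g0‖ * ‖z‖ := by
      have := abs_nonneg (f z)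
      have := mul_nonneg hg0nn (norm_nonneg z)
      linarith
    by_cases hε1 : 1 ≤ ε
    · nlinarith
    push_neg at hε1
    have h2ε : (2 : ℝ) - ε < ‖f + g‖ := by rw [hfg]; linarith
    obtain ⟨x0, hx0⟩ : ∃ x, (2 - ε) * ‖x‖ < ‖(f + g) x‖ := by
      by_contra h
      push_neg at h
      have := ContinuousLinearMap.opNorm_le_bound (f + g)
        (by linarith : (0:ℝ) ≤ 2 - ε) (fun x => h x)
      linarith
    have hx0ne : x0 ≠ 0 := by
      rintro rfl; simp at hx0
    have hnx0 : (0:ℝ) < ‖x0‖ := norm_pos_iff.mpr hx0ne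
    set x1 : X := ‖x0‖⁻¹ • x0 with hx1def
    have hnx1 : ‖x1‖ = 1 := by
      rw [hx1def, norm_smul, Real.norm_eq_abs, abs_of_pos (inv_pos.mpr hnx0),
        inv_mul_cancel₀ hnx0.ne']
    have hfg1 : 2 - ε < ‖(f + g) x1‖ := by
      have heq : ‖(f + g) x1‖ = ‖x0‖⁻¹ * ‖(f + g) x0‖ := by
        rw [hx1def, map_smul, smul_eq_mul, Real.norm_eq_abs, abs_mul,
          abs_of_pos (inv_pos.mpr hnx0)]
        rfl
      rw [heq]
      calc 2 - ε = ‖x0‖⁻¹ * ((2 - ε) * ‖x0‖) := by field_simp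
        _ < ‖x0‖⁻¹ * ‖(f + g) x0‖ :=
            mul_lt_mul_of_pos_left hx0 (inv_pos.mpr hnx0)
    obtain ⟨x, hnx, hsum⟩ : ∃ x : X, ‖x‖ = 1 ∧ 2 - ε < f x + g x := by
      have happ : (f + g) x1 = f x1 + g x1 := rfl
      rcases le_or_gt 0 ((f + g) x1) with h | h
      · refine ⟨x1, hnx1, ?_⟩
        rw [Real.norm_eq_abs, abs_of_nonneg h, happ] at hfg1
        exact hfg1
      · refine ⟨-x1, by simp [hnx1], ?_⟩
        rw [Real.norm_eq_abs, abs_of_neg h, happ] at hfg1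
        rw [map_neg, map_neg]
        linarith
    have hfx1 : f x ≤ 1 := by
      calc f x ≤ ‖f x‖ := le_abs_self _
        _ ≤ ‖f‖ * ‖x‖ := f.le_opNorm _
        _ = 1 := by rw [hf, hnx, one_mul]
    have hgx1 : g x ≤ 1 := by
      calc g x ≤ ‖g x‖ := le_abs_self _
        _ ≤ ‖g‖ * ‖x‖ := g.le_opNorm _
        _ = 1 := by rw [hg, hnx, one_mul]
    have hfxlb : 1 - ε < f x := by linarith
    have hgxlb : 1 - ε < g x := by linarith
    set t : ℝ := (f - g) x with htdef
    have htfg : t = f x - g x := by rw [htdef, ContinuousLinearMap.sub_apply]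
    have ht : |t| < ε := by
      rw [abs_lt, htfg]; constructor <;> linarith
    set y : X := x - t • z with hydef
    have hyY : y ∈ Y := by
      rw [hY, LinearMap.mem_ker, ContinuousLinearMap.coe_coe]
      have : (f - g) y = (f - g) x - t * (f - g) z := by
        rw [hydef, map_sub, map_smul, smul_eq_mul]
      rw [this, hz, ← htdef]; ring
    have hny : ‖y‖ ≤ 1 + ε * ‖z‖ := by
      have h1 : ‖y‖ ≤ ‖x‖ + ‖t • z‖ := norm_sub_le _ _
      have h2 : ‖t • z‖ = |t| * ‖z‖ := by rw [norm_smul, Real.norm_eq_abs]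
      have h3 : |t| * ‖z‖ ≤ ε * ‖z‖ :=
        mul_le_mul_of_nonneg_right ht.le (norm_nonneg z)
      rw [hnx] at h1
      linarith [h1, h2 ▸ h3]
    have hfylb : 1 - ε * (1 + |f z|) < f y := by
      have hfyeq : f y = f x - t * f z := by
        rw [hydef, map_sub, map_smul, smul_eq_mul]
      have h1 : t * f z ≤ |t| * |f z| := by
        rw [← abs_mul]; exact le_abs_self _
      have h2 : |t| * |f z| ≤ ε * |f z| :=
        mul_le_mul_of_nonneg_right ht.le (abs_nonneg _)
      have h3 : ε * (1 + |f z|) = ε + ε * |f z| := by ring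
      rw [hfyeq]
      linarith
    have hfyub : f y ≤ ‖g0‖ * ‖y‖ := by
      have heq : f y = g0 ⟨y, hyY⟩ := rfl
      rw [heq]
      calc g0 ⟨y, hyY⟩ ≤ ‖g0 ⟨y, hyY⟩‖ := le_abs_self _
        _ ≤ ‖g0‖ * ‖(⟨y, hyY⟩ : Y)‖ := g0.le_opNorm _
        _ = ‖g0‖ * ‖y‖ := rfl
    have hmul : ‖g0‖ * ‖y‖ ≤ ‖g0‖ * (1 + ε * ‖z‖) :=
      mul_le_mul_of_nonneg_left hny hg0nn
    have hexp1 : ‖g0‖ * (1 + ε * ‖z‖) = ‖g0‖ + ε * (‖g0‖ * ‖z‖) := by ring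
    have hexp2 : ε * (1 + |f z| + ‖g0‖ * ‖z‖)
        = ε * (1 + |f z|) + ε * (‖g0‖ * ‖z‖) := by ring
    linarith
  have hge : 1 ≤ ‖g0‖ := by
    apply le_of_forall_pos_le_add
    intro δ hδ
    have hCpos : 0 < 1 + |f z| + ‖g0‖ * ‖z‖ := by
      have := abs_nonneg (f z)
      have := mul_nonneg (g0.opNorm_nonneg) (norm_nonneg z)
      linarith
    have := key (δ / (1 + |f z| + ‖g0‖ * ‖z‖)) (div_pos hδ hCpos)
    rw [div_mul_cancel₀ _ hCpos.ne'] at this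
    linarith
  have hnorm : ‖g0‖ = 1 := le_antisymm hle hge
  obtain ⟨F, _, hFuniq⟩ := hu Y g0
  have h1 : f = F := hFuniq f ⟨hfy, hf.trans hnorm.symm⟩
  have h2 : g = F := hFuniq g ⟨hgy, hg.trans hnorm.symm⟩
  exact hne (h1.trans h2.symm)
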